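/- Fix M₀ > 0 and γ > 0, and set R₀ = √(γ/(π M₀)). Let g : (0,∞) → ℝ be a continuous, non-increasing, non-negative function such that s ↦ s·g(s) is locally integrable on [0,∞). Then for every x ∈ ℝ², the supremum of ∫_{ℝ²} g(|x−y|) f(y) dy over all essentially bounded compactly supported measurable functions f : ℝ² → ℝ satisfying 0 ≤ f ≤ M₀ almost everywhere and ∫_{ℝ²} f = γ, equals 2π M₀ ∫₀^{R₀} s·g(s) ds; moreover the supremum is attained at f* = M₀·1_{B(x,R₀)}, the function equal to M₀ on the open Euclidean ball B(x,R₀) of center x and radius R₀ and equal to 0 elsewhere. -/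

import Mathlib

open MeasureTheory Real
open scoped ENNReal

section Aux

local notation "E2" => EuclideanSpace ℝ (Fin 2)

lemma volume_unit_ball_2d : (volume (Metric.ball (0 : EuclideanSpace ℝ (Fin 2)) 1)) = ENNReal.ofReal π := by
  rw [EuclideanSpace.volume_ball]
  norm_num [Real.sq_sqrt pi_pos.le, Real.Gamma_two]

lemma finrank_E2 : Module.finrank ℝ (EuclideanSpace ℝ (Fin 2)) = 2 := by
  simp [finrank_euclideanSpace]

/-- Bochner radial integral formula in `ℝ²`. -/
lemma radial_integral (x : EuclideanSpace ℝ (Fin 2)) (F : ℝ → ℝ) :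
    ∫ y : EuclideanSpace ℝ (Fin 2), F (dist x y)
      = 2 * π * ∫ s in Set.Ioi (0:ℝ), s * F s := by
  have h1 : ∀ y : EuclideanSpace ℝ (Fin 2), F (dist x y) = F ‖y - x‖ := fun y => by
    rw [dist_comm, dist_eq_norm]
  calc ∫ y : EuclideanSpace ℝ (Fin 2), F (dist x y)
      = ∫ y : EuclideanSpace ℝ (Fin 2), F ‖y - x‖ := by simp_rw [h1]
    _ = ∫ y : EuclideanSpace ℝ (Fin 2), F ‖y‖ :=
        integral_sub_right_eq_self (fun y : EuclideanSpace ℝ (Fin 2) => F ‖y‖) x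
    _ = 2 * π * ∫ s in Set.Ioi (0:ℝ), s * F s := by
        rw [integral_fun_norm_addHaar (volume : Measure (EuclideanSpace ℝ (Fin 2))) F,
          finrank_E2, measureReal_def, volume_unit_ball_2d, ENNReal.toReal_ofReal pi_pos.le]
        have h2 : (2 - 1 : ℕ) = 1 := rfl
        simp only [h2, pow_one, smul_eq_mul, nsmul_eq_mul, Nat.cast_ofNat]
        ring

/-- lintegral version of `integral_fun_norm_addHaar`. -/
lemma lintegral_fun_norm_addHaar {E : Type*} [NormedAddCommGroup E] [NormedSpace ℝ E]
    [MeasurableSpace E] [BorelSpace E] [FiniteDimensional ℝ E] [Nontrivial E]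
    (μ : Measure E) [μ.IsAddHaarMeasure] {G : ℝ → ℝ≥0∞} (hG : Measurable G) :
    ∫⁻ y, G ‖y‖ ∂μ = μ.toSphere Set.univ *
      ∫⁻ s in Set.Ioi (0:ℝ), ENNReal.ofReal (s ^ (Module.finrank ℝ E - 1)) * G s := by
  calc
    ∫⁻ y, G ‖y‖ ∂μ = ∫⁻ y in {(0:E)}ᶜ, G ‖y‖ ∂μ := by
        rw [MeasureTheory.restrict_compl_singleton]
    _ = ∫⁻ y : ({(0:E)}ᶜ : Set E), G ‖y.1‖ ∂(μ.comap Subtype.val) :=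
        (lintegral_subtype_comap (measurableSet_singleton _).compl _).symm
    _ = ∫⁻ p : Metric.sphere (0:E) 1 × Set.Ioi (0:ℝ), G p.2
          ∂(μ.toSphere.prod (Measure.volumeIoiPow (Module.finrank ℝ E - 1))) := by
        have h := μ.measurePreserving_homeomorphUnitSphereProd.lintegral_comp_emb
          (Homeomorph.measurableEmbedding _) (G ∘ Subtype.val ∘ Prod.snd)
        refine Eq.trans ?_ h
        congr 1
        funext y
        simp
    _ = μ.toSphere Set.univ * ∫⁻ r : Set.Ioi (0:ℝ), G r
          ∂(Measure.volumeIoiPow (Module.finrank ℝ E - 1)) := by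
        have hm : Measurable fun p : Metric.sphere (0:E) 1 × Set.Ioi (0:ℝ) => G ↑p.2 :=
          hG.comp (measurable_subtype_coe.comp measurable_snd)
        rw [lintegral_prod _ hm.aemeasurable]
        simp [lintegral_const, mul_comm]
    _ = μ.toSphere Set.univ *
          ∫⁻ s in Set.Ioi (0:ℝ), ENNReal.ofReal (s ^ (Module.finrank ℝ E - 1)) * G s := by
        congr 1
        have hm2 : Measurable fun r : Set.Ioi (0:ℝ) => G ↑r := hG.comp measurable_subtype_coe
        have h1 : ∫⁻ r : Set.Ioi (0:ℝ), G ↑r ∂(Measure.volumeIoiPow (Module.finrank ℝ E - 1))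
            = ∫⁻ r : Set.Ioi (0:ℝ),
                ENNReal.ofReal (↑r ^ (Module.finrank ℝ E - 1)) * G ↑r
                ∂(Measure.comap Subtype.val volume) :=
          lintegral_withDensity_eq_lintegral_mul _
            ((measurable_subtype_coe.pow_const _).ennreal_ofReal) hm2
        rw [h1]
        exact lintegral_subtype_comap measurableSet_Ioi
          (fun s => ENNReal.ofReal (s ^ (Module.finrank ℝ E - 1)) * G s)

/-- lintegral radial formula in `ℝ²`. -/
lemma radial_lintegral (x : EuclideanSpace ℝ (Fin 2)) {G : ℝ → ℝ≥0∞} (hG : Measurable G) :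
    ∫⁻ y : EuclideanSpace ℝ (Fin 2), G (dist x y)
      = ENNReal.ofReal (2 * π) * ∫⁻ s in Set.Ioi (0:ℝ), ENNReal.ofReal s * G s := by
  have h1 : ∀ y : EuclideanSpace ℝ (Fin 2), G (dist x y) = G ‖y - x‖ := fun y => by
    rw [dist_comm, dist_eq_norm]
  have hGd : Measurable fun y : EuclideanSpace ℝ (Fin 2) => G ‖y‖ :=
    hG.comp measurable_norm
  calc ∫⁻ y : EuclideanSpace ℝ (Fin 2), G (dist x y)
      = ∫⁻ y : EuclideanSpace ℝ (Fin 2), G ‖y - x‖ := by simp_rw [h1]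
    _ = ∫⁻ y : EuclideanSpace ℝ (Fin 2), G ‖y‖ :=
        lintegral_sub_right_eq_self (fun y : EuclideanSpace ℝ (Fin 2) => G ‖y‖) x
    _ = ENNReal.ofReal (2 * π) * ∫⁻ s in Set.Ioi (0:ℝ), ENNReal.ofReal s * G s := by
        rw [lintegral_fun_norm_addHaar (volume : Measure (EuclideanSpace ℝ (Fin 2))) hG]
        congr 1
        · rw [Measure.toSphere_apply_univ, finrank_E2, volume_unit_ball_2d]
          rw [ENNReal.ofReal_mul two_pos.le]
          norm_num
        · refine setLIntegral_congr_fun measurableSet_Ioi ?_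
          intro s _
          rw [finrank_E2]
          norm_num

end Aux

/-- Lemma B.1 (rearrangement of the mass): among nonnegative densities bounded by `M₀`
with total mass `γ`, the integral of a radially non-increasing kernel centered at `x`
is maximized by the uniform density `M₀` on the ball `B(x, R₀)` with `π M₀ R₀² = γ`,
with maximal value `2π M₀ ∫₀^{R₀} s g(s) ds`. -/
theorem rearrangement_of_mass
    (M₀ γ R₀ : ℝ) (hM₀ : 0 < M₀) (hγ : 0 < γ)
    (hR₀ : R₀ = Real.sqrt (γ / (π * M₀)))
    (g : ℝ → ℝ)
    (hgcont : ContinuousOn g (Set.Ioi 0))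
    (hgmono : AntitoneOn g (Set.Ioi 0))
    (hgnonneg : ∀ s ∈ Set.Ioi (0:ℝ), 0 ≤ g s)
    (hgint : LocallyIntegrableOn (fun s => s * g s) (Set.Ici 0))
    (x : EuclideanSpace ℝ (Fin 2)) :
    (∀ f : EuclideanSpace ℝ (Fin 2) → ℝ,
      Measurable f → HasCompactSupport f →
      (∀ᵐ y ∂(volume), 0 ≤ f y ∧ f y ≤ M₀) →
      (∫ y, f y) = γ →
      ∫ y, g (dist x y) * f y ≤ 2 * π * M₀ * ∫ s in Set.Ioc (0:ℝ) R₀, s * g s) ∧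
    (∫ y, g (dist x y) * (Metric.ball x R₀).indicator (fun _ => M₀) y
      = 2 * π * M₀ * ∫ s in Set.Ioc (0:ℝ) R₀, s * g s) := by
  have hπ : (0:ℝ) < π := pi_pos
  have hR₀pos : 0 < R₀ := by
    rw [hR₀]; exact Real.sqrt_pos.2 (div_pos hγ (mul_pos hπ hM₀))
  have hR₀sq : R₀ ^ 2 = γ / (π * M₀) := by
    rw [hR₀]; exact Real.sq_sqrt (div_pos hγ (mul_pos hπ hM₀)).le
  have hγeq : M₀ * (π * R₀ ^ 2) = γ := by
    rw [hR₀sq]; field_simp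
  classical
  -- measurable version of g
  set gm : ℝ → ℝ := (Set.Ioi (0:ℝ)).piecewise g (fun _ => 0) with hgmdef
  have hgm_meas : Measurable gm :=
    hgcont.measurable_piecewise continuousOn_const measurableSet_Ioi
  have hgm : ∀ s : ℝ, 0 < s → gm s = g s := fun s hs =>
    Set.piecewise_eq_of_mem _ _ _ hs
  have hgm_nonneg : ∀ s, 0 ≤ gm s := by
    intro s
    by_cases hs : 0 < s
    · rw [hgm s hs]; exact hgnonneg s hs
    · have : gm s = 0 := Set.piecewise_eq_of_notMem _ _ _ hs
      rw [this]
  set fstar : EuclideanSpace ℝ (Fin 2) → ℝ := (Metric.ball x R₀).indicator (fun _ => M₀)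
    with hfstardef
  have hfstar_meas : Measurable fstar := measurable_const.indicator Metric.isOpen_ball.measurableSet
  have hfstar_nonneg : ∀ y, 0 ≤ fstar y := fun y => Set.indicator_nonneg (fun _ _ => hM₀.le) y
  set F : ℝ → ℝ := fun s => gm s * (Set.Iio R₀).indicator (fun _ => M₀) s with hFdef
  have hF_meas : Measurable F := hgm_meas.mul (measurable_const.indicator measurableSet_Iio)
  have hFy : ∀ y, gm (dist x y) * fstar y = F (dist x y) := by
    intro y
    have : y ∈ Metric.ball x R₀ ↔ dist x y ∈ Set.Iio R₀ := by
      rw [Metric.mem_ball, dist_comm, Set.mem_Iio]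
    simp only [hfstardef, hFdef]
    by_cases h : y ∈ Metric.ball x R₀
    · rw [Set.indicator_of_mem h, Set.indicator_of_mem (this.1 h)]
    · rw [Set.indicator_of_notMem h, Set.indicator_of_notMem (fun hh => h (this.2 hh))]
  -- s * F s as an indicator
  have hsF : ∀ s : ℝ, s * F s = (Set.Iio R₀).indicator (fun t => M₀ * (t * gm t)) s := by
    intro s
    simp only [hFdef]
    by_cases h : s ∈ Set.Iio R₀
    · rw [Set.indicator_of_mem h, Set.indicator_of_mem h]; ring
    · rw [Set.indicator_of_notMem h, Set.indicator_of_notMem h]; ring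
  -- integrability of s * gm s on Ioc 0 R₀
  have hsg : IntegrableOn (fun s => s * gm s) (Set.Ioc 0 R₀) volume := by
    have h1 : IntegrableOn (fun s => s * g s) (Set.Icc 0 R₀) volume :=
      hgint.integrableOn_compact_subset
        (Set.Icc_subset_Ici_self) isCompact_Icc
    refine ((h1.mono_set Set.Ioc_subset_Icc_self).congr_fun ?_ measurableSet_Ioc)
    intro s hs
    show s * g s = s * gm s
    rw [hgm s hs.1]
  -- core value computation
  have hval : ∫ y, gm (dist x y) * fstar y
      = 2 * π * M₀ * ∫ s in Set.Ioc (0:ℝ) R₀, s * g s := by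
    have h1 : ∫ y, gm (dist x y) * fstar y
        = ∫ y : EuclideanSpace ℝ (Fin 2), F (dist x y) := by
      simp_rw [hFy]
    rw [h1, radial_integral x F]
    have h2 : ∫ s in Set.Ioi (0:ℝ), s * F s
        = ∫ s in Set.Ioi (0:ℝ), (Set.Iio R₀).indicator (fun t => M₀ * (t * gm t)) s := by
      simp_rw [hsF]
    rw [h2, setIntegral_indicator measurableSet_Iio, Set.Ioi_inter_Iio,
      ← integral_Ioc_eq_integral_Ioo, integral_const_mul]
    have h3 : ∫ s in Set.Ioc (0:ℝ) R₀, s * gm s = ∫ s in Set.Ioc (0:ℝ) R₀, s * g s := by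
      refine setIntegral_congr_fun measurableSet_Ioc ?_
      intro s hs
      show s * gm s = s * g s
      rw [hgm s hs.1]
    rw [h3]; ring
  -- a.e. facts
  have hax : ∀ᵐ y : EuclideanSpace ℝ (Fin 2) ∂volume, y ≠ x := by
    have : {y : EuclideanSpace ℝ (Fin 2) | ¬ y ≠ x} = {x} := by ext y; simp
    rw [ae_iff, this]
    exact measure_singleton x
  have hg_gm_ae : ∀ᵐ y : EuclideanSpace ℝ (Fin 2) ∂volume,
      g (dist x y) = gm (dist x y) := by
    filter_upwards [hax] with y hy
    rw [hgm _ (dist_pos.2 (fun h => hy h.symm))]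
  have hpart2 : ∫ y, g (dist x y) * (Metric.ball x R₀).indicator (fun _ => M₀) y
      = 2 * π * M₀ * ∫ s in Set.Ioc (0:ℝ) R₀, s * g s := by
    rw [← hval]
    refine integral_congr_ae ?_
    filter_upwards [hg_gm_ae] with y hy
    rw [hy]
  refine ⟨?_, hpart2⟩
  -- Part 1
  intro f hmeas hsupp hbound hmass
  have hc : 0 ≤ gm R₀ := hgm_nonneg R₀
  set c : ℝ := gm R₀ with hcdef
  -- integrability of f
  have hfint : Integrable f volume := by
    rw [← integrableOn_iff_integrable_of_support_subset (subset_tsupport f)]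
    refine Measure.integrableOn_of_bounded (M := M₀) hsupp.measure_lt_top.ne
      hmeas.aestronglyMeasurable ?_
    refine ae_restrict_of_ae ?_
    filter_upwards [hbound] with y hy
    rw [Real.norm_eq_abs, abs_of_nonneg hy.1]; exact hy.2
  -- lintegral quantities
  set A : ℝ≥0∞ := ∫⁻ y, ENNReal.ofReal (gm (dist x y) * f y) ∂volume with hAdef
  set A' : ℝ≥0∞ := ∫⁻ y, ENNReal.ofReal (gm (dist x y) * fstar y) ∂volume with hA'def
  have hgmd_meas : Measurable fun y : EuclideanSpace ℝ (Fin 2) => gm (dist x y) :=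
    hgm_meas.comp (measurable_const.dist measurable_id)
  have hgmd_nonneg : ∀ y : EuclideanSpace ℝ (Fin 2), 0 ≤ gm (dist x y) :=
    fun y => hgm_nonneg _
  -- pointwise a.e. inequality
  have hptwise : ∀ᵐ y : EuclideanSpace ℝ (Fin 2) ∂volume,
      ENNReal.ofReal (gm (dist x y) * f y) + ENNReal.ofReal (c * fstar y)
        ≤ ENNReal.ofReal (gm (dist x y) * fstar y) + ENNReal.ofReal (c * f y) := by
    filter_upwards [hax, hbound] with y hy hby
    obtain ⟨h0, h1⟩ := hby
    have hd : 0 < dist x y := dist_pos.2 (fun h => hy h.symm)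
    have key : gm (dist x y) * f y + c * fstar y
        ≤ gm (dist x y) * fstar y + c * f y := by
      by_cases hlt : dist x y < R₀
      · have hmem : y ∈ Metric.ball x R₀ := by
          rw [Metric.mem_ball, dist_comm]; exact hlt
        have hfs : fstar y = M₀ := by
          rw [hfstardef, Set.indicator_of_mem hmem]
        have hca : c ≤ gm (dist x y) := by
          rw [hcdef, hgm _ hd, hgm _ hR₀pos]
          exact hgmono (Set.mem_Ioi.2 hd) (Set.mem_Ioi.2 hR₀pos) hlt.le
        rw [hfs]
        nlinarith [mul_nonneg (sub_nonneg.2 hca) (sub_nonneg.2 h1)]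
      · have hmem : y ∉ Metric.ball x R₀ := by
          rw [Metric.mem_ball, dist_comm]; exact hlt
        have hfs : fstar y = 0 := by
          rw [hfstardef, Set.indicator_of_notMem hmem]
        have hac : gm (dist x y) ≤ c := by
          rw [hcdef, hgm _ hd, hgm _ hR₀pos]
          exact hgmono (Set.mem_Ioi.2 hR₀pos) (Set.mem_Ioi.2 hd) (not_lt.1 hlt)
        rw [hfs]
        nlinarith [mul_nonneg (sub_nonneg.2 hac) h0]
    have hn1 : 0 ≤ gm (dist x y) * f y := mul_nonneg (hgmd_nonneg y) h0
    have hn2 : 0 ≤ c * fstar y := mul_nonneg hc (hfstar_nonneg y)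
    rw [← ENNReal.ofReal_add hn1 hn2, ← ENNReal.ofReal_add
      (mul_nonneg (hgmd_nonneg y) (hfstar_nonneg y)) (mul_nonneg hc h0)]
    exact ENNReal.ofReal_le_ofReal key
  -- the two "c" lintegrals are equal and finite
  have hBf : ∫⁻ y, ENNReal.ofReal (c * f y) ∂volume = ENNReal.ofReal c * ENNReal.ofReal γ := by
    have : ∀ y : EuclideanSpace ℝ (Fin 2),
        ENNReal.ofReal (c * f y) = ENNReal.ofReal c * ENNReal.ofReal (f y) := fun y =>
      ENNReal.ofReal_mul hc
    simp_rw [this]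
    rw [lintegral_const_mul _ hmeas.ennreal_ofReal]
    congr 1
    rw [← ofReal_integral_eq_lintegral_ofReal hfint
      (hbound.mono fun y hy => hy.1), hmass]
  have hvolball : volume (Metric.ball x R₀) = ENNReal.ofReal (π * R₀ ^ 2) := by
    rw [EuclideanSpace.volume_ball]
    rw [show (Fintype.card (Fin 2)) = 2 from Fintype.card_fin 2]
    norm_num [Real.sq_sqrt pi_pos.le, Real.Gamma_two]
    rw [← ENNReal.ofReal_pow hR₀pos.le, ← ENNReal.ofReal_mul (by positivity)]
    ring_nf
  have hBfstar : ∫⁻ y, ENNReal.ofReal (c * fstar y) ∂volume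
      = ENNReal.ofReal c * ENNReal.ofReal γ := by
    have h1 : ∀ y : EuclideanSpace ℝ (Fin 2), ENNReal.ofReal (c * fstar y)
        = (Metric.ball x R₀).indicator (fun _ => ENNReal.ofReal (c * M₀)) y := by
      intro y
      simp only [hfstardef]
      by_cases h : y ∈ Metric.ball x R₀
      · rw [Set.indicator_of_mem h, Set.indicator_of_mem h]
      · rw [Set.indicator_of_notMem h, Set.indicator_of_notMem h, mul_zero,
          ENNReal.ofReal_zero]
    simp_rw [h1]
    rw [lintegral_indicator Metric.isOpen_ball.measurableSet, setLIntegral_const, hvolball,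
      ← ENNReal.ofReal_mul (mul_nonneg hc hM₀.le)]
    rw [← ENNReal.ofReal_mul hc]
    congr 1
    rw [mul_assoc, hγeq]
  -- A + B ≤ A' + B
  have hsum : A + (∫⁻ y, ENNReal.ofReal (c * fstar y) ∂volume)
      ≤ A' + ∫⁻ y, ENNReal.ofReal (c * f y) ∂volume := by
    rw [hAdef, hA'def]
    rw [← lintegral_add_left (show Measurable fun y => gm (dist x y) * f y from
        hgmd_meas.mul hmeas).ennreal_ofReal,
      ← lintegral_add_left (show Measurable fun y => gm (dist x y) * fstar y from
        hgmd_meas.mul hfstar_meas).ennreal_ofReal]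
    exact lintegral_mono_ae hptwise
  have hAA' : A ≤ A' := by
    rw [hBfstar, hBf] at hsum
    have hBne : ENNReal.ofReal c * ENNReal.ofReal γ ≠ ∞ :=
      ENNReal.mul_ne_top ENNReal.ofReal_ne_top ENNReal.ofReal_ne_top
    exact (ENNReal.add_le_add_iff_right hBne).1 hsum
  -- A' is finite, with value given by the radial formula
  have hA'_eq : A' = ENNReal.ofReal (2 * π) *
      ∫⁻ s in Set.Ioi (0:ℝ), ENNReal.ofReal s * ENNReal.ofReal (F s) := by
    rw [hA'def]
    have h1 : ∀ y : EuclideanSpace ℝ (Fin 2),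
        ENNReal.ofReal (gm (dist x y) * fstar y) = ENNReal.ofReal (F (dist x y)) := fun y => by
      rw [hFy y]
    simp_rw [h1]
    exact radial_lintegral x hF_meas.ennreal_ofReal
  have hJ : (∫⁻ s in Set.Ioi (0:ℝ), ENNReal.ofReal s * ENNReal.ofReal (F s)) < ∞ := by
    have h1 : ∫⁻ s in Set.Ioi (0:ℝ), ENNReal.ofReal s * ENNReal.ofReal (F s)
        = ∫⁻ s in Set.Ioi (0:ℝ), ENNReal.ofReal (s * F s) := by
      refine setLIntegral_congr_fun measurableSet_Ioi ?_
      intro s hs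
      beta_reduce
      rw [ENNReal.ofReal_mul (le_of_lt hs)]
    have h2 : ∀ s : ℝ, ENNReal.ofReal (s * F s)
        = (Set.Iio R₀).indicator (fun t => ENNReal.ofReal (M₀ * (t * gm t))) s := by
      intro s
      rw [hsF s]
      by_cases h : s ∈ Set.Iio R₀
      · rw [Set.indicator_of_mem h, Set.indicator_of_mem h]
      · rw [Set.indicator_of_notMem h, Set.indicator_of_notMem h, ENNReal.ofReal_zero]
    rw [h1]
    simp_rw [h2]
    rw [lintegral_indicator measurableSet_Iio, Measure.restrict_restrict measurableSet_Iio,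
      Set.Iio_inter_Ioi]
    have hInt : IntegrableOn (fun t => M₀ * (t * gm t)) (Set.Ioo (0:ℝ) R₀) volume :=
      (hsg.mono_set Set.Ioo_subset_Ioc_self).const_mul M₀
    exact hInt.lintegral_lt_top
  have hA'top : A' ≠ ∞ := by
    rw [hA'_eq]
    exact ENNReal.mul_ne_top ENNReal.ofReal_ne_top hJ.ne
  -- identify the Bochner integrals with toReal of the lintegrals
  have hA_eq : ∫ y, g (dist x y) * f y = A.toReal := by
    have h1 : ∫ y, g (dist x y) * f y = ∫ y, gm (dist x y) * f y := by
      refine integral_congr_ae ?_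
      filter_upwards [hg_gm_ae] with y hy
      rw [hy]
    rw [h1, hAdef]
    refine integral_eq_lintegral_of_nonneg_ae ?_
      (hgmd_meas.mul hmeas).aestronglyMeasurable
    filter_upwards [hbound] with y hy
    exact mul_nonneg (hgmd_nonneg y) hy.1
  have hA'_toReal : A'.toReal = 2 * π * M₀ * ∫ s in Set.Ioc (0:ℝ) R₀, s * g s := by
    rw [← hval, hA'def]
    refine (integral_eq_lintegral_of_nonneg_ae ?_
      (hgmd_meas.mul hfstar_meas).aestronglyMeasurable).symm
    filter_upwards with y
    exact mul_nonneg (hgmd_nonneg y) (hfstar_nonneg y)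
  rw [hA_eq, ← hA'_toReal]
  exact ENNReal.toReal_mono hA'top hAA'
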